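/- Let V be a finite-dimensional vector space over ℝ, let P : V* → V be a skew-symmetric linear map, and let W ⊆ V be a subspace with W ∩ P(W°) = 0. Then: (i) for every linear functional ξ : W → ℝ there exists v ∈ V* whose restriction to W equals ξ and such that P(v) ∈ W; (ii) if v₁, v₂ ∈ V* both restrict to ξ on W and satisfy P(v₁) ∈ W and P(v₂) ∈ W, then P(v₁) = P(v₂). Hence the assignment ξ ↦ P(v) gives a well-defined linear map W* → W (the reduced Poisson tensor). -/
import Mathlib


/-- Pointwise content of Lemma 2.5 (Self-Consistency): if `P` is skew-symmetric and
`W ∩ P(W°) = 0`, then every functional `ξ` on `W` extends to a covector `v` on `V` with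
`P v ∈ W`, the value `P v` is independent of the chosen extension, and the resulting
assignment `ξ ↦ P v` is a well-defined linear map `W* → W` (the reduced Poisson tensor). -/
theorem reduced_poisson_tensor_well_defined (V : Type*) [AddCommGroup V] [Module ℝ V]
    [FiniteDimensional ℝ V]
    (P : Module.Dual ℝ V →ₗ[ℝ] V)
    (hPskew : ∀ α β : Module.Dual ℝ V, α (P β) = - β (P α))
    (W : Submodule ℝ V)
    (hW : ∀ v : Module.Dual ℝ V, (∀ w ∈ W, v w = 0) → P v ∈ W → P v = 0) :
    (∀ ξ : Module.Dual ℝ W, ∃ v : Module.Dual ℝ V,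
        (∀ w : W, v (w : V) = ξ w) ∧ P v ∈ W) ∧
    (∀ v₁ v₂ : Module.Dual ℝ V, (∀ w : W, v₁ (w : V) = v₂ (w : V)) →
        P v₁ ∈ W → P v₂ ∈ W → P v₁ = P v₂) ∧
    (∃ ρ : Module.Dual ℝ W →ₗ[ℝ] V, (∀ ξ : Module.Dual ℝ W, ρ ξ ∈ W) ∧
        ∀ (ξ : Module.Dual ℝ W) (v : Module.Dual ℝ V),
          (∀ w : W, v (w : V) = ξ w) → P v ∈ W → P v = ρ ξ) := by
  -- uniqueness
  have huniq : ∀ v₁ v₂ : Module.Dual ℝ V, (∀ w : W, v₁ (w : V) = v₂ (w : V)) →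
      P v₁ ∈ W → P v₂ ∈ W → P v₁ = P v₂ := by
    intro v₁ v₂ h h1 h2
    have h0 : P (v₁ - v₂) = 0 := by
      apply hW
      · intro w hw
        simp only [LinearMap.sub_apply, sub_eq_zero]
        exact h ⟨w, hw⟩
      · rw [map_sub]; exact W.sub_mem h1 h2
    rw [map_sub, sub_eq_zero] at h0
    exact h0
  -- key: the image of P lies in W ⊔ P(W°)
  set U : Submodule ℝ V := W ⊔ Submodule.map P W.dualAnnihilator with hU
  have hWU : W ≤ U := le_sup_left
  have hkey : ∀ v : Module.Dual ℝ V, P v ∈ U := by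
    intro v
    rw [← Subspace.dualAnnihilator_dualCoannihilator_eq (W := U),
      Submodule.mem_dualCoannihilator]
    intro β hβ
    rw [Submodule.mem_dualAnnihilator] at hβ
    have hβW : ∀ w ∈ W, β w = 0 := fun w hw => hβ w (hWU hw)
    have hβP : ∀ α ∈ W.dualAnnihilator, α (P β) = 0 := by
      intro α hα
      have := hβ (P α) (Submodule.mem_sup_right (Submodule.mem_map_of_mem hα))
      rw [hPskew β α] at this
      linarith
    have hPβW : P β ∈ W := by
      rw [← Subspace.dualAnnihilator_dualCoannihilator_eq (W := W),
        Submodule.mem_dualCoannihilator]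
      exact hβP
    have : P β = 0 := hW β hβW hPβW
    rw [hPskew β v, this, map_zero, neg_zero]
  -- existence
  have hex : ∀ ξ : Module.Dual ℝ W, ∃ v : Module.Dual ℝ V,
      (∀ w : W, v (w : V) = ξ w) ∧ P v ∈ W := by
    intro ξ
    set v₀ : Module.Dual ℝ V := Subspace.dualLift W ξ with hv₀
    obtain ⟨w, hw, y, hy, hsum⟩ := Submodule.mem_sup.mp (hkey v₀)
    obtain ⟨α, hα, hαy⟩ := hy
    refine ⟨v₀ - α, ?_, ?_⟩
    · intro x
      have hα' : α ∈ W.dualAnnihilator := hα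
      rw [Submodule.mem_dualAnnihilator] at hα'
      simp only [LinearMap.sub_apply, hα' (x : V) x.2, sub_zero, hv₀]
      exact Subspace.dualLift_of_subtype x
    · rw [map_sub]
      have hPα : P v₀ - P α = w := by rw [hαy, ← hsum]; abel
      rw [hPα]; exact hw
  refine ⟨hex, huniq, ?_⟩
  -- the reduced tensor as a linear map
  choose f hf1 hf2 using hex
  refine ⟨{ toFun := fun ξ => P (f ξ)
            map_add' := ?_
            map_smul' := ?_ }, fun ξ => hf2 ξ, fun ξ v hv hPv => huniq v (f ξ) (fun w => by rw [hv w, hf1 ξ w]) hPv (hf2 ξ)⟩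
  · intro ξ₁ ξ₂
    have : P (f (ξ₁ + ξ₂)) = P (f ξ₁ + f ξ₂) := by
      apply huniq
      · intro w; simp [hf1 ξ₁ w, hf1 ξ₂ w, hf1 (ξ₁ + ξ₂) w]
      · exact hf2 _
      · rw [map_add]; exact W.add_mem (hf2 ξ₁) (hf2 ξ₂)
    show P (f (ξ₁ + ξ₂)) = P (f ξ₁) + P (f ξ₂)
    rw [this, map_add]
  · intro c ξ
    have : P (f (c • ξ)) = P (c • f ξ) := by
      apply huniq
      · intro w; simp [hf1 ξ w, hf1 (c • ξ) w]
      · exact hf2 _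
      · rw [map_smul]; exact W.smul_mem c (hf2 ξ)
    show P (f (c • ξ)) = c • P (f ξ)
    rw [this, map_smul]
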